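/- If (Bx,x) = 1 and (Bx,y) = 0, where B = A^{-1} with A = diag(a_0,...,a_n) having distinct nonzero entries, then Σ_{k=0}^n a_k^{-1} F_k(x,y) = 0, where F_k(x,y) = y_k^2 + Σ_{j≠k}(x_k y_j − x_j y_k)^2/(a_k − a_j). -/
import Mathlib


/-- If (Bx,x)=1 and (Bx,y)=0 with B = A⁻¹, A = diag(a), then
Σ a_k⁻¹ F_k(x,y) = 0. -/
theorem sum_inv_a_F_eq_zero (n : ℕ) (a : Fin (n+1) → ℝ)
    (ha : Function.Injective a) (ha0 : ∀ k, a k ≠ 0)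
    (x y : Fin (n+1) → ℝ)
    (hx : ∑ k, x k * x k / a k = 1)
    (hxy : ∑ k, x k * y k / a k = 0) :
    ∑ k, (y k^2 + ∑ j ∈ Finset.univ \ {k}, (x k * y j - x j * y k)^2 / (a k - a j)) / a k
      = 0 := by
  have key : ∀ k j : Fin (n+1),
      (x k * y j - x j * y k)^2 / (a k - a j) / a k
      + (x j * y k - x k * y j)^2 / (a j - a k) / a j
      = -((x k * x k / a k) * (y j * y j / a j))
        - ((x j * x j / a j) * (y k * y k / a k))
        + 2 * ((x k * y k / a k) * (x j * y j / a j)) := by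
    intro k j
    by_cases h : k = j
    · subst h
      simp only [sub_self, zero_div, div_zero, add_zero, zero_add]
      field_simp
      ring
    · have h1 : a k ≠ a j := fun he => h (ha he)
      have h2 : a k - a j ≠ 0 := sub_ne_zero.mpr h1
      have h3 : a j - a k ≠ 0 := sub_ne_zero.mpr h1.symm
      have h4 : (a k - a j) * a k ≠ 0 := mul_ne_zero h2 (ha0 k)
      have h5 : (a j - a k) * a j ≠ 0 := mul_ne_zero h3 (ha0 j)
      have L : (x k * y j - x j * y k)^2 / (a k - a j) / a k
          + (x j * y k - x k * y j)^2 / (a j - a k) / a j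
          = -((x k * y j - x j * y k)^2) / (a k * a j) := by
        rw [div_div, div_div, div_add_div _ _ h4 h5,
          div_eq_div_iff (mul_ne_zero h4 h5) (mul_ne_zero (ha0 k) (ha0 j))]
        ring
      have R : -((x k * x k / a k) * (y j * y j / a j))
          - ((x j * x j / a j) * (y k * y k / a k))
          + 2 * ((x k * y k / a k) * (x j * y j / a j))
          = -((x k * y j - x j * y k)^2) / (a k * a j) := by
        field_simp
        ring
      rw [L, R]
  have hstep : ∀ k : Fin (n+1),
      (y k^2 + ∑ j ∈ Finset.univ \ {k}, (x k * y j - x j * y k)^2 / (a k - a j)) / a k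
      = y k^2 / a k + ∑ j, (x k * y j - x j * y k)^2 / (a k - a j) / a k := by
    intro k
    rw [add_div]
    congr 1
    rw [← Finset.sum_div]
    congr 1
    rw [Finset.sum_eq_sum_sdiff_singleton_add (Finset.mem_univ k)
      (fun j => (x k * y j - x j * y k)^2 / (a k - a j))]
    simp
  simp only [hstep]
  rw [Finset.sum_add_distrib]
  have hcomm : (∑ k, ∑ j, (x k * y j - x j * y k)^2 / (a k - a j) / a k)
      = ∑ k, ∑ j, (x j * y k - x k * y j)^2 / (a j - a k) / a j := Finset.sum_comm
  have e1 : (∑ k : Fin (n+1), ∑ j, (x k * x k / a k) * (y j * y j / a j))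
      = ∑ k, y k ^ 2 / a k := by
    rw [← Finset.sum_mul_sum, hx, one_mul]
    exact Finset.sum_congr rfl fun j _ => by rw [sq]
  have e2 : (∑ k : Fin (n+1), ∑ j, (x j * x j / a j) * (y k * y k / a k))
      = ∑ k, y k ^ 2 / a k := by
    rw [Finset.sum_comm, ← Finset.sum_mul_sum, hx, one_mul]
    exact Finset.sum_congr rfl fun j _ => by rw [sq]
  have e3 : (∑ k : Fin (n+1), ∑ j, 2 * ((x k * y k / a k) * (x j * y j / a j))) = 0 := by
    have : ∀ k : Fin (n+1), (∑ j, 2 * ((x k * y k / a k) * (x j * y j / a j))) = 0 := by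
      intro k
      rw [← Finset.mul_sum, ← Finset.mul_sum, hxy, mul_zero, mul_zero]
    simp [this]
  have h2S : (∑ k, ∑ j, (x k * y j - x j * y k)^2 / (a k - a j) / a k)
      + (∑ k, ∑ j, (x k * y j - x j * y k)^2 / (a k - a j) / a k)
      = -(2 * ∑ k, y k^2 / a k) := by
    nth_rewrite 2 [hcomm]
    rw [← Finset.sum_add_distrib]
    have hc : ∀ k : Fin (n+1), ((∑ j, (x k * y j - x j * y k)^2 / (a k - a j) / a k)
        + ∑ j, (x j * y k - x k * y j)^2 / (a j - a k) / a j)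
        = ∑ j, (-((x k * x k / a k) * (y j * y j / a j))
          - ((x j * x j / a j) * (y k * y k / a k))
          + 2 * ((x k * y k / a k) * (x j * y j / a j))) := by
      intro k
      rw [← Finset.sum_add_distrib]
      exact Finset.sum_congr rfl fun j _ => key k j
    simp only [hc, Finset.sum_add_distrib, Finset.sum_sub_distrib, Finset.sum_neg_distrib]
    rw [e1, e2, e3]
    ring
  have hS : (∑ k, ∑ j, (x k * y j - x j * y k)^2 / (a k - a j) / a k)
      = -(∑ k, y k^2 / a k) := by linarith
  rw [hS]
  ring
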